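/- Let X = {x ∈ ℝ^n : ⟨a_i, x⟩ + b_i = 0 for i ∈ E, ω_i(x) ≤ 0 for i ∈ I} be nonempty, where E and I are finite index sets, a_i ∈ ℝ^n, b_i ∈ ℝ, and each ω_i : ℝ^n → ℝ is convex and continuously differentiable. Let g, h, G, H : ℝ^n → ℝ be convex with g ρ-strongly convex (ρ ≥ 0), let f = g − h, and let β ≥ 0 with ρ + β > 0. Assume the generalized MFCQ: for every x ∈ X with G(x) ≤ H(x) there exists y ∈ X such that ⟨∇ω_i(x), y − x⟩ < 0 for every i ∈ I with ω_i(x) = 0, and, whenever G(x) = H(x), also G(y) − H(x) − ⟨s_H, y − x⟩ < 0 for every s_H ∈ ∂H(x). Let x^0 ∈ X satisfy G(x^0) ≤ H(x^0), assume the level set {x ∈ X : G(x) ≤ H(x), f(x) ≤ f(x^0)} is bounded, and suppose that for each k ≥ 0 there are s_h^k ∈ ∂h(x^k) and s_H^k ∈ ∂H(x^k) such that x^{k+1} minimizes u ↦ g(u) − ⟨s_h^k, u − x^k⟩ + (β/2)‖u − x^k‖² over {u ∈ X : G(u) − H(x^k) − ⟨s_H^k, u − x^k⟩ ≤ 0}.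 Then every accumulation point x* of (x^k) satisfies: x* ∈ X, G(x*) ≤ H(x*), and there exists λ* ≥ 0 with λ*(G(x*) − H(x*)) = 0 and 0 ∈ ∂g(x*) − ∂h(x*) + λ*(∂G(x*) − ∂H(x*)) + N_X(x*); i.e., x* is a KKT point of min{g(x) − h(x) : x ∈ X, G(x) − H(x) ≤ 0}. -/

import Mathlib

set_option maxHeartbeats 1000000


open scoped RealInnerProductSpace
open Filter

/-- The convex subdifferential of `φ : ℝ^n → ℝ` at `x`. -/
def subdiff {n : ℕ} (φ : EuclideanSpace ℝ (Fin n) → ℝ) (x : EuclideanSpace ℝ (Fin n)) :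
    Set (EuclideanSpace ℝ (Fin n)) :=
  {s | ∀ y, φ x + ⟪s, y - x⟫ ≤ φ y}

/-- The normal cone of the convex set `X` at `x`. -/
def normalCone {n : ℕ} (X : Set (EuclideanSpace ℝ (Fin n))) (x : EuclideanSpace ℝ (Fin n)) :
    Set (EuclideanSpace ℝ (Fin n)) :=
  {v | ∀ y ∈ X, ⟪v, y - x⟫ ≤ 0}

section Helpers

variable {n : ℕ}
local notation "E" => EuclideanSpace ℝ (Fin n)

lemma convexOn_continuous {φ : E → ℝ} (hφ : ConvexOn ℝ Set.univ φ) : Continuous φ := by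
  have := hφ.continuousOn isOpen_univ
  rwa [← continuousOn_univ]

lemma inner_combo (w z u v : E) (s t : ℝ) (hst : s + t = 1) :
    ⟪w, s•u + t•v - z⟫ = s*⟪w, u - z⟫ + t*⟪w, v - z⟫ := by
  rw [inner_sub_right, inner_add_right, real_inner_smul_right, real_inner_smul_right,
    inner_sub_right, inner_sub_right]
  linear_combination (⟪w, z⟫ : ℝ) * hst

lemma norm_combo_sq (u v w : E) (s t : ℝ) (hst : s + t = 1) :
    ‖s•u + t•v - w‖^2 = s*‖u-w‖^2 + t*‖v-w‖^2 - s*t*‖u-v‖^2 := by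
  have h1 : s•u + t•v - w = s•(u-w) + t•(v-w) := by
    have hw : (s+t)•w = w := by rw [hst, one_smul]
    rw [smul_sub, smul_sub]
    rw [show s•u - s•w + (t•v - t•w) = s•u + t•v - (s+t)•w by rw [add_smul]; abel, hw]
  have h2 : ‖u - v‖ = ‖(u-w) - (v-w)‖ := by congr 1; abel
  have h3 := norm_sub_sq_real (u-w) (v-w)
  rw [h1, h2, norm_add_sq_real, norm_smul, norm_smul, real_inner_smul_left, real_inner_smul_right]
  simp only [Real.norm_eq_abs, mul_pow, sq_abs]
  linear_combination (s*‖u-w‖^2 + t*‖v-w‖^2) * hst + (s*t) * h3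

lemma convexOn_inner_sub (w z : E) : ConvexOn ℝ Set.univ (fun u => ⟪w, u - z⟫) := by
  refine ⟨convex_univ, fun u _ v _ s t _ _ hst => ?_⟩
  simp only [smul_eq_mul]
  rw [inner_combo w z u v s t hst]

lemma convexOn_quad (z : E) {β : ℝ} (hβ : 0 ≤ β) :
    ConvexOn ℝ Set.univ (fun u => β * ‖u - z‖^2) := by
  refine ⟨convex_univ, fun u _ v _ s t hs ht hst => ?_⟩
  simp only [smul_eq_mul]
  rw [norm_combo_sq u v z s t hst]
  nlinarith [mul_nonneg (mul_nonneg hs ht) (sq_nonneg ‖u-v‖)]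

lemma convexOn_smul' {φ : E → ℝ} (hφ : ConvexOn ℝ Set.univ φ) {c : ℝ} (hc : 0 ≤ c) :
    ConvexOn ℝ Set.univ (fun u => c * φ u) := by
  refine ⟨convex_univ, fun u hu v hv s t hs ht hst => ?_⟩
  have := hφ.2 hu hv hs ht hst
  simp only [smul_eq_mul] at this ⊢
  nlinarith [mul_le_mul_of_nonneg_left this hc]

lemma aux_eps {A B : ℝ} (h : ∀ ε : ℝ, 0 < ε → ε ≤ 1 → A + ε * B ≤ 0) : A ≤ 0 := by
  by_contra h'
  push_neg at h'
  have h1 := h 1 one_pos le_rfl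
  have hB : B < 0 := by linarith
  have hBne : B ≠ 0 := ne_of_lt hB
  set ε := min 1 (A / (-(2*B))) with hε
  have hpos : 0 < A / (-(2*B)) := div_pos h' (by linarith)
  have hεpos : 0 < ε := lt_min one_pos hpos
  have hεle : ε ≤ 1 := min_le_left _ _
  have key := h ε hεpos hεle
  have h2 : ε * B ≥ (A / (-(2*B))) * B :=
    mul_le_mul_of_nonpos_right (min_le_right _ _) hB.le
  have h3 : (A / (-(2*B))) * B = -A/2 := by field_simp
  linarith

lemma combo_lt {a b s1 s2 r1 r2 : ℝ} (ha : 0 ≤ a) (hb : 0 ≤ b) (hab : a + b = 1)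
    (h1 : s1 < r1) (h2 : s2 < r2) : a*s1 + b*s2 < a*r1 + b*r2 := by
  rcases ha.lt_or_eq with ha' | ha'
  · nlinarith [mul_le_mul_of_nonneg_left h2.le hb]
  · have hb1 : b = 1 := by linarith
    rw [← ha', hb1]; simpa using h2

lemma subdiff_bound {φ : E → ℝ} (hφ : ConvexOn ℝ Set.univ φ) (R : ℝ) :
    ∃ M : ℝ, ∀ z : E, ‖z‖ ≤ R → ∀ s ∈ subdiff φ z, ‖s‖ ≤ M := by
  rcases le_or_gt 0 R with hR | hR
  · have hc := convexOn_continuous hφ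
    have hK : IsCompact (Metric.closedBall (0:E) (R+1)) := isCompact_closedBall _ _
    have hne : (Metric.closedBall (0:E) (R+1)).Nonempty := ⟨0, by simp; linarith⟩
    obtain ⟨zM, _, hmax⟩ := hK.exists_isMaxOn hne hc.continuousOn
    obtain ⟨zm, _, hmin⟩ := hK.exists_isMinOn hne hc.continuousOn
    refine ⟨φ zM - φ zm, fun z hz s hs => ?_⟩
    have hzK : z ∈ Metric.closedBall (0:E) (R+1) := by
      simp only [Metric.mem_closedBall, dist_zero_right]; linarith
    rcases eq_or_ne s 0 with rfl | hs0
    · simp only [norm_zero]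
      have h1 : φ z ≤ φ zM := hmax hzK
      have h2 : φ zm ≤ φ z := hmin hzK
      linarith
    · have hsn : 0 < ‖s‖ := norm_pos_iff.2 hs0
      set y := z + ‖s‖⁻¹ • s with hy
      have hyK : y ∈ Metric.closedBall (0:E) (R+1) := by
        simp only [Metric.mem_closedBall, dist_zero_right]
        calc ‖z + ‖s‖⁻¹ • s‖ ≤ ‖z‖ + ‖‖s‖⁻¹ • s‖ := norm_add_le _ _
        _ ≤ R + 1 := by
            rw [norm_smul, norm_inv, norm_norm, inv_mul_cancel₀ (ne_of_gt hsn)]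
            linarith
      have hsub := hs y
      have : ⟪s, y - z⟫ = ‖s‖ := by
        rw [hy, add_sub_cancel_left, real_inner_smul_right, real_inner_self_eq_norm_sq]
        field_simp
      rw [this] at hsub
      have h1 : φ y ≤ φ zM := hmax hyK
      have h2 : φ zm ≤ φ z := hmin hzK
      linarith
  · exact ⟨0, fun z hz => absurd (lt_of_le_of_lt hz hR) (not_lt.2 (norm_nonneg z))⟩

lemma master {p q : E → ℝ} {C : Set E}
    (hp : ConvexOn ℝ Set.univ p) (hq : ConvexOn ℝ Set.univ q) (hC : Convex ℝ C)
    {x : E} (hx : x ∈ C) (hmin : ∀ u ∈ C, p x + q x ≤ p u + q u) :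
    ∃ s ∈ subdiff p x, ∀ u ∈ C, q x ≤ q u + ⟪s, u - x⟫ := by
  have hpc : Continuous p := convexOn_continuous hp
  set A : Set (E × ℝ) := {z | p z.1 - p x < z.2} with hA
  set B : Set (E × ℝ) := {z | z.1 ∈ C ∧ z.2 ≤ q x - q z.1} with hB
  have hAopen : IsOpen A := isOpen_lt (by fun_prop) continuous_snd
  have hAconv : Convex ℝ A := by
    intro z1 hz1 z2 hz2 a b ha hb hab
    simp only [hA, Set.mem_setOf_eq] at *
    have := hp.2 (Set.mem_univ z1.1) (Set.mem_univ z2.1) ha hb hab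
    have h2 : a * (p z1.1 - p x) + b * (p z2.1 - p x) < a * z1.2 + b * z2.2 :=
      combo_lt ha hb hab hz1 hz2
    simp only [smul_eq_mul] at this ⊢
    have hx1 : a * (p x) + b * (p x) = p x := by rw [← add_mul, hab, one_mul]
    calc p (a • z1.1 + b • z2.1) - p x ≤ a * p z1.1 + b * p z2.1 - p x := by linarith
    _ = a * (p z1.1 - p x) + b * (p z2.1 - p x) := by linarith
    _ < a * z1.2 + b * z2.2 := h2
  have hBconv : Convex ℝ B := by
    intro z1 hz1 z2 hz2 a b ha hb hab
    simp only [hB, Set.mem_setOf_eq] at *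
    refine ⟨hC hz1.1 hz2.1 ha hb hab, ?_⟩
    have := hq.2 (Set.mem_univ z1.1) (Set.mem_univ z2.1) ha hb hab
    simp only [smul_eq_mul] at this ⊢
    have hx1 : a * (q x) + b * (q x) = q x := by rw [← add_mul, hab, one_mul]
    have e1 : a * z1.2 ≤ a * (q x - q z1.1) := mul_le_mul_of_nonneg_left hz1.2 ha
    have e2 : b * z2.2 ≤ b * (q x - q z2.1) := mul_le_mul_of_nonneg_left hz2.2 hb
    calc a * z1.2 + b * z2.2 ≤ a * (q x - q z1.1) + b * (q x - q z2.1) := by linarith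
    _ = q x - (a * q z1.1 + b * q z2.1) := by linarith
    _ ≤ q x - q (a • z1.1 + b • z2.1) := by linarith
  have hdisj : Disjoint A B := by
    rw [Set.disjoint_left]
    rintro z hzA ⟨hzC, hzq⟩
    have := hmin z.1 hzC
    simp only [hA, Set.mem_setOf_eq] at hzA
    linarith
  obtain ⟨f, c, hfA, hfB⟩ := geometric_hahn_banach_open hAconv hAopen hBconv hdisj
  set α : ℝ := f (0, 1) with hαdef
  have key : ∀ z : E × ℝ, f z = f (z.1, 0) + z.2 * α := by
    intro z
    have h : z = (z.1, (0:ℝ)) + z.2 • ((0:E), (1:ℝ)) := by simp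
    conv_lhs => rw [h]
    rw [map_add, map_smul, smul_eq_mul, ← hαdef]
  have hα : α < 0 := by
    have hm1 : ((x, (1:ℝ)) : E × ℝ) ∈ A := by
      simp only [hA, Set.mem_setOf_eq]; norm_num
    have hm2 : ((x, (0:ℝ)) : E × ℝ) ∈ B := ⟨hx, by norm_num⟩
    have h1 : f (x, 1) < c := hfA _ hm1
    have h2 : c ≤ f (x, 0) := hfB _ hm2
    have hk := key (x, 1)
    simp only at hk
    linarith
  have hαpos : 0 < -α := by linarith
  have hup : ∀ u : E, f (u, 0) + (p u - p x) * α ≤ c := by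
    intro u
    have : ∀ ε : ℝ, 0 < ε → ε ≤ 1 → (f (u, 0) + (p u - p x) * α - c) + ε * α ≤ 0 := by
      intro ε hε _
      have hm : (u, p u - p x + ε) ∈ A := by simp [hA]; linarith
      have := hfA _ hm
      rw [key (u, p u - p x + ε)] at this
      simp only at this
      nlinarith
    have := aux_eps this
    linarith
  have hdown : ∀ u ∈ C, c ≤ f (u, 0) + (q x - q u) * α := by
    intro u hu
    have hm : (u, q x - q u) ∈ B := ⟨hu, le_refl _⟩
    have := hfB _ hm
    rwa [key (u, q x - q u)] at this
  have hc : c = f (x, 0) := by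
    have h1 := hup x
    have h2 := hdown x hx
    simp at h1 h2
    linarith
  set φ : E →L[ℝ] ℝ := f.comp (ContinuousLinearMap.inl ℝ (EuclideanSpace ℝ (Fin n)) ℝ) with hφdef
  have hφ : ∀ u : E, f (u, 0) = φ u := fun u => rfl
  set w : E := (InnerProductSpace.toDual ℝ (EuclideanSpace ℝ (Fin n))).symm φ with hwdef
  have hw : ∀ u : E, f (u, 0) = ⟪w, u⟫ := by
    intro u
    rw [hφ u, hwdef]
    exact (InnerProductSpace.toDual_symm_apply).symm
  refine ⟨(-α)⁻¹ • w, ?_, ?_⟩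
  · intro y
    have h1 := hup y
    rw [hw, hc, hw] at h1
    have h2 : ⟪w, y - x⟫ ≤ (-α) * (p y - p x) := by
      rw [inner_sub_right]; linarith
    have h3 : ⟪(-α)⁻¹ • w, y - x⟫ = (-α)⁻¹ * ⟪w, y - x⟫ := real_inner_smul_left _ _ _
    rw [h3]
    have h4 : (-α)⁻¹ * ⟪w, y - x⟫ ≤ (-α)⁻¹ * ((-α) * (p y - p x)) :=
      mul_le_mul_of_nonneg_left h2 (by positivity)
    have h5 : (-α)⁻¹ * ((-α) * (p y - p x)) = p y - p x :=
      inv_mul_cancel_left₀ (by linarith) _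
    linarith
  · intro u hu
    have h1 := hdown u hu
    rw [hw, hc, hw] at h1
    have h2 : (-α) * (q x - q u) ≤ ⟪w, u - x⟫ := by
      rw [inner_sub_right]; linarith
    have h3 : ⟪(-α)⁻¹ • w, u - x⟫ = (-α)⁻¹ * ⟪w, u - x⟫ := real_inner_smul_left _ _ _
    have h4 : (-α)⁻¹ * ((-α) * (q x - q u)) ≤ (-α)⁻¹ * ⟪w, u - x⟫ :=
      mul_le_mul_of_nonneg_left h2 (by positivity)
    have h5 : (-α)⁻¹ * ((-α) * (q x - q u)) = q x - q u :=
      inv_mul_cancel_left₀ (by linarith) _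
    rw [h3]; linarith

lemma subdiff_nonempty {φ : E → ℝ} (hφ : ConvexOn ℝ Set.univ φ) (x : E) :
    (subdiff φ x).Nonempty := by
  obtain ⟨s, hs, -⟩ := master hφ (convexOn_const (0:ℝ) convex_univ) (convex_singleton x)
    (Set.mem_singleton x) (fun u hu => by rw [Set.mem_singleton_iff] at hu; rw [hu])
  exact ⟨s, hs⟩

end Helpers
/-- subsequential convergence of the proximal DC algorithm to KKT points:
under the generalized MFCQ and bounded level set assumptions, every accumulation point of the
proximal DC iterates for `min{g - h : x ∈ X, G - H ≤ 0}` is a KKT point. -/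
theorem stmt10 (n : ℕ) (ιE ιI : Type) [Fintype ιE] [Fintype ιI]
    (a : ιE → EuclideanSpace ℝ (Fin n)) (b : ιE → ℝ)
    (ω : ιI → EuclideanSpace ℝ (Fin n) → ℝ)
    (hω_conv : ∀ i, ConvexOn ℝ Set.univ (ω i)) (hω_smooth : ∀ i, ContDiff ℝ 1 (ω i))
    (X : Set (EuclideanSpace ℝ (Fin n)))
    (hX : X = {x | (∀ i, ⟪a i, x⟫ + b i = 0) ∧ ∀ i, ω i x ≤ 0}) (hXne : X.Nonempty)
    (g h G H : EuclideanSpace ℝ (Fin n) → ℝ)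
    (hg : ConvexOn ℝ Set.univ g) (hh : ConvexOn ℝ Set.univ h)
    (hG : ConvexOn ℝ Set.univ G) (hH : ConvexOn ℝ Set.univ H)
    (ρ β : ℝ) (hρ : 0 ≤ ρ) (hβ : 0 ≤ β) (hρβ : 0 < ρ + β)
    (hgstrong : ConvexOn ℝ Set.univ (fun y => g y - ρ / 2 * ‖y‖ ^ 2))
    (hMFCQ : ∀ x ∈ X, G x ≤ H x → ∃ y ∈ X,
      (∀ i, ω i x = 0 → ⟪gradient (ω i) x, y - x⟫ < 0) ∧
      (G x = H x → ∀ sH ∈ subdiff H x, G y - H x - ⟪sH, y - x⟫ < 0))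
    (x : ℕ → EuclideanSpace ℝ (Fin n)) (hx0X : x 0 ∈ X) (hx0feas : G (x 0) ≤ H (x 0))
    (hlevel : Bornology.IsBounded
      {y | y ∈ X ∧ G y ≤ H y ∧ g y - h y ≤ g (x 0) - h (x 0)})
    (hiter : ∀ k, ∃ sh ∈ subdiff h (x k), ∃ sH ∈ subdiff H (x k),
      (x (k + 1) ∈ X ∧ G (x (k + 1)) - H (x k) - ⟪sH, x (k + 1) - x k⟫ ≤ 0) ∧
      ∀ u ∈ X, G u - H (x k) - ⟪sH, u - x k⟫ ≤ 0 →
        g (x (k + 1)) - ⟪sh, x (k + 1) - x k⟫ + β / 2 * ‖x (k + 1) - x k‖ ^ 2 ≤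
          g u - ⟪sh, u - x k⟫ + β / 2 * ‖u - x k‖ ^ 2)
    (xstar : EuclideanSpace ℝ (Fin n)) (ks : ℕ → ℕ) (hks : StrictMono ks)
    (hconv : Tendsto (fun i => x (ks i)) atTop (nhds xstar)) :
    xstar ∈ X ∧ G xstar ≤ H xstar ∧
    ∃ lam : ℝ, 0 ≤ lam ∧ lam * (G xstar - H xstar) = 0 ∧
      ∃ sg ∈ subdiff g xstar, ∃ sh ∈ subdiff h xstar, ∃ sG ∈ subdiff G xstar,
        ∃ sH ∈ subdiff H xstar, ∃ v ∈ normalCone X xstar,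
          sg - sh + lam • (sG - sH) + v = 0 := by
  classical
  have hgc : Continuous g := convexOn_continuous hg
  have hhc : Continuous h := convexOn_continuous hh
  have hGc : Continuous G := convexOn_continuous hG
  have hHc : Continuous H := convexOn_continuous hH
  -- X is convex and closed
  have hXconv : Convex ℝ X := by
    rw [hX]
    intro u hu v hv s t hs ht hst
    simp only [Set.mem_setOf_eq] at hu hv ⊢
    constructor
    · intro i
      rw [inner_add_right, real_inner_smul_right, real_inner_smul_right]
      linear_combination s * (hu.1 i) + t * (hv.1 i) - (b i) * hst
    · intro i
      have h1 := (hω_conv i).2 (Set.mem_univ u) (Set.mem_univ v) hs ht hst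
      simp only [smul_eq_mul] at h1
      nlinarith [mul_le_mul_of_nonneg_left (hu.2 i) hs, mul_le_mul_of_nonneg_left (hv.2 i) ht]
  have hXclosed : IsClosed X := by
    rw [hX]
    have h1 : IsClosed {y : EuclideanSpace ℝ (Fin n) | ∀ i, ⟪a i, y⟫ + b i = 0} := by
      rw [Set.setOf_forall]
      exact isClosed_iInter fun i =>
        isClosed_eq ((continuous_const.inner continuous_id).add continuous_const) continuous_const
    have h2 : IsClosed {y : EuclideanSpace ℝ (Fin n) | ∀ i, ω i y ≤ 0} := by
      rw [Set.setOf_forall]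
      exact isClosed_iInter fun i => isClosed_le (hω_smooth i).continuous continuous_const
    exact (Set.setOf_and (p := fun y => ∀ i, ⟪a i, y⟫ + b i = 0)
      (q := fun y => ∀ i, ω i y ≤ 0)) ▸ h1.inter h2
  choose sh hsh sH hsH hfeas2 hmin2 using hiter
  have hmemX : ∀ k, x (k+1) ∈ X := fun k => (hfeas2 k).1
  have hfeas' : ∀ k, G (x (k+1)) - H (x k) - ⟪sH k, x (k+1) - x k⟫ ≤ 0 := fun k => (hfeas2 k).2
  -- feasibility of all iterates
  have hfeasX : ∀ k, x k ∈ X ∧ G (x k) ≤ H (x k) := by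
    intro k
    induction k with
    | zero => exact ⟨hx0X, hx0feas⟩
    | succ k ih =>
      refine ⟨hmemX k, ?_⟩
      have h1 := hfeas' k
      have h2 := hsH k (x (k+1))
      linarith
  -- sufficient decrease
  have hdesc : ∀ k, (g (x (k+1)) - h (x (k+1))) + (ρ+β)/4 * ‖x (k+1) - x k‖^2 ≤
      g (x k) - h (x k) := by
    intro k
    have hmX : ((1/2:ℝ))•(x (k+1)) + ((1/2:ℝ))•(x k) ∈ X :=
      hXconv (hfeasX (k+1)).1 (hfeasX k).1 (by norm_num) (by norm_num) (by norm_num)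
    set z := x (k+1) with hz
    set u := x k with hu
    set m : EuclideanSpace ℝ (Fin n) := ((1/2:ℝ))•z + ((1/2:ℝ))•u with hm
    have hGm : G m ≤ 1/2 * G z + 1/2 * G u := by
      have := hG.2 (Set.mem_univ z) (Set.mem_univ u)
        (by norm_num : (0:ℝ) ≤ 1/2) (by norm_num : (0:ℝ) ≤ 1/2) (by norm_num)
      exact this
    have hin : ⟪sH k, m - u⟫ = 1/2*⟪sH k, z - u⟫ + 1/2*⟪sH k, u - u⟫ :=
      inner_combo _ u z u _ _ (by norm_num)
    have huu : (⟪sH k, u - u⟫ : ℝ) = 0 := by rw [sub_self, inner_zero_right]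
    have hcon : G m - H u - ⟪sH k, m - u⟫ ≤ 0 := by
      have h1 := hfeas' k
      have h2 := (hfeasX k).2
      rw [hin, huu]
      linarith
    have hFm := hmin2 k m hmX hcon
    -- strong convexity at midpoint
    have hgs := hgstrong.2 (Set.mem_univ z) (Set.mem_univ u)
      (by norm_num : (0:ℝ) ≤ 1/2) (by norm_num : (0:ℝ) ≤ 1/2) (by norm_num)
    simp only [smul_eq_mul] at hgs
    have hnq := norm_combo_sq z u 0 (1/2) (1/2) (by norm_num)
    simp only [sub_zero] at hnq
    rw [hnq] at hgs
    have hgm : g m ≤ 1/2 * g z + 1/2 * g u - ρ/8 * ‖z - u‖^2 := by linarith [hgs]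
    have hquad : ‖m - u‖^2 = 1/2*‖z-u‖^2 + 1/2*‖u-u‖^2 - (1/2)*(1/2)*‖z-u‖^2 :=
      norm_combo_sq z u u _ _ (by norm_num)
    have huu0 : ‖u - u‖ = 0 := by rw [sub_self, norm_zero]
    rw [huu0] at hquad
    have hin2 : ⟪sh k, m - u⟫ = 1/2*⟪sh k, z - u⟫ + 1/2*⟪sh k, u - u⟫ :=
      inner_combo _ u z u _ _ (by norm_num)
    have huu2 : (⟪sh k, u - u⟫ : ℝ) = 0 := by rw [sub_self, inner_zero_right]
    have hFmexp : g m - ⟪sh k, m - u⟫ + β/2 * ‖m - u‖^2 ≤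
        1/2*(g z - ⟪sh k, z - u⟫ + β/2 * ‖z - u‖^2) + 1/2 * g u - (ρ+β)/8 * ‖z - u‖^2 := by
      rw [hin2, huu2, hquad]
      linarith [hgm]
    -- combine with optimality
    have hkey : g z - ⟪sh k, z - u⟫ + β/2 * ‖z - u‖^2 + (ρ+β)/4 * ‖z - u‖^2 ≤ g u := by
      linarith [hFm, hFmexp]
    have hsub : ⟪sh k, z - u⟫ ≤ h z - h u := by
      have := hsh k z
      linarith
    linarith [hkey, hsub, mul_nonneg (by linarith : (0:ℝ) ≤ β/2) (sq_nonneg ‖z - u‖)]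
  -- monotonicity and level-set membership
  have hanti : Antitone (fun k => g (x k) - h (x k)) := by
    apply antitone_nat_of_succ_le
    intro k
    have := hdesc k
    nlinarith [mul_nonneg (by linarith : (0:ℝ) ≤ (ρ+β)/4) (sq_nonneg ‖x (k+1) - x k‖)]
  have hmemL : ∀ k, x k ∈ {y | y ∈ X ∧ G y ≤ H y ∧ g y - h y ≤ g (x 0) - h (x 0)} :=
    fun k => ⟨(hfeasX k).1, (hfeasX k).2, hanti (Nat.zero_le k)⟩
  obtain ⟨R, hR⟩ := hlevel.subset_closedBall 0
  have hxR : ∀ k, ‖x k‖ ≤ R := by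
    intro k
    have := hR (hmemL k)
    simpa [Metric.mem_closedBall, dist_zero_right] using this
  -- step sizes tend to zero
  have hδ : Tendsto (fun k => ‖x (k+1) - x k‖) atTop (nhds 0) := by
    have hbdd : BddBelow (Set.range (fun k => g (x k) - h (x k))) := by
      obtain ⟨zm, _, hzm⟩ := (isCompact_closedBall (0:EuclideanSpace ℝ (Fin n)) R).exists_isMinOn
        ⟨x 0, by simpa [Metric.mem_closedBall, dist_zero_right] using hxR 0⟩
        ((hgc.sub hhc).continuousOn)
      refine ⟨g zm - h zm, ?_⟩
      rintro _ ⟨k, rfl⟩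
      exact hzm (by simpa [Metric.mem_closedBall, dist_zero_right] using hxR k)
    have hlim := tendsto_atTop_ciInf hanti hbdd
    have hlim1 : Tendsto (fun k => g (x (k+1)) - h (x (k+1))) atTop
        (nhds (⨅ i, (g (x i) - h (x i)))) := hlim.comp (tendsto_add_atTop_nat 1)
    have hdiff : Tendsto (fun k => (g (x k) - h (x k)) - (g (x (k+1)) - h (x (k+1)))) atTop
        (nhds 0) := by
      have := hlim.sub hlim1
      simpa using this
    have hc4 : (0:ℝ) < (ρ+β)/4 := by linarith
    have hsq : Tendsto (fun k => ‖x (k+1) - x k‖^2) atTop (nhds 0) := by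
      have hbnd : ∀ k, ‖x (k+1) - x k‖^2 ≤
          ((ρ+β)/4)⁻¹ * ((g (x k) - h (x k)) - (g (x (k+1)) - h (x (k+1)))) := by
        intro k
        exact (le_inv_mul_iff₀ hc4).2 (by linarith [hdesc k])
      have hlim2 : Tendsto (fun k => ((ρ+β)/4)⁻¹ *
          ((g (x k) - h (x k)) - (g (x (k+1)) - h (x (k+1))))) atTop (nhds 0) := by
        have := hdiff.const_mul (((ρ+β)/4)⁻¹)
        simpa using this
      exact squeeze_zero (fun k => sq_nonneg _) hbnd hlim2
    have hsqrt := hsq.sqrt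
    simp only [Real.sqrt_zero] at hsqrt
    exact hsqrt.congr (fun k => Real.sqrt_sq (norm_nonneg _))
  -- the accumulation point is feasible
  have hxstarX : xstar ∈ X :=
    hXclosed.mem_of_tendsto hconv (Eventually.of_forall (fun i => (hfeasX (ks i)).1))
  have hGHstar : G xstar ≤ H xstar := by
    refine le_of_tendsto_of_tendsto ((hGc.tendsto xstar).comp hconv)
      ((hHc.tendsto xstar).comp hconv) (Eventually.of_forall (fun i => (hfeasX (ks i)).2))
  have hconv1 : Tendsto (fun i => x (ks i + 1)) atTop (nhds xstar) := by
    have h1 : Tendsto (fun i => x (ks i + 1) - x (ks i)) atTop (nhds 0) := by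
      rw [tendsto_zero_iff_norm_tendsto_zero]
      exact hδ.comp hks.tendsto_atTop
    have := h1.add hconv
    simpa using this
  -- extract convergent subgradient subsequence
  obtain ⟨Mh, hMh⟩ := subdiff_bound hh R
  obtain ⟨MH, hMH⟩ := subdiff_bound hH R
  have hKc : IsCompact ((Metric.closedBall (0:EuclideanSpace ℝ (Fin n)) Mh) ×ˢ
      (Metric.closedBall (0:EuclideanSpace ℝ (Fin n)) MH)) :=
    (isCompact_closedBall _ _).prod (isCompact_closedBall _ _)
  have hmemK : ∀ i, (sh (ks i), sH (ks i)) ∈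
      (Metric.closedBall (0:EuclideanSpace ℝ (Fin n)) Mh) ×ˢ
      (Metric.closedBall (0:EuclideanSpace ℝ (Fin n)) MH) := by
    intro i
    constructor
    · simp only [Metric.mem_closedBall, dist_zero_right]
      exact hMh _ (hxR _) _ (hsh _)
    · simp only [Metric.mem_closedBall, dist_zero_right]
      exact hMH _ (hxR _) _ (hsH _)
  obtain ⟨sl, _, φ, hφmono, hφtend⟩ := hKc.tendsto_subseq hmemK
  set js : ℕ → ℕ := fun i => ks (φ i) with hjs
  have hjsx : Tendsto (fun i => x (js i)) atTop (nhds xstar) := hconv.comp hφmono.tendsto_atTop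
  have hjsx1 : Tendsto (fun i => x (js i + 1)) atTop (nhds xstar) :=
    hconv1.comp hφmono.tendsto_atTop
  have hshlim : Tendsto (fun i => sh (js i)) atTop (nhds sl.1) :=
    (continuous_fst.tendsto sl).comp hφtend
  have hsHlim : Tendsto (fun i => sH (js i)) atTop (nhds sl.2) :=
    (continuous_snd.tendsto sl).comp hφtend
  have hbh : sl.1 ∈ subdiff h xstar := by
    intro y
    have hlim : Tendsto (fun i => h (x (js i)) + ⟪sh (js i), y - x (js i)⟫) atTop
        (nhds (h xstar + ⟪sl.1, y - xstar⟫)) :=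
      ((hhc.tendsto _).comp hjsx).add (hshlim.inner (tendsto_const_nhds.sub hjsx))
    exact le_of_tendsto hlim (Eventually.of_forall (fun i => hsh (js i) y))
  have hbH : sl.2 ∈ subdiff H xstar := by
    intro y
    have hlim : Tendsto (fun i => H (x (js i)) + ⟪sH (js i), y - x (js i)⟫) atTop
        (nhds (H xstar + ⟪sl.2, y - xstar⟫)) :=
      ((hHc.tendsto _).comp hjsx).add (hsHlim.inner (tendsto_const_nhds.sub hjsx))
    exact le_of_tendsto hlim (Eventually.of_forall (fun i => hsH (js i) y))
  -- the limit subproblem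
  set bh := sl.1 with hbhdef
  set bH := sl.2 with hbHdef
  set psif : EuclideanSpace ℝ (Fin n) → ℝ := fun u => G u - H xstar - ⟪bH, u - xstar⟫ with hpsif
  set Ff : EuclideanSpace ℝ (Fin n) → ℝ :=
    fun u => g u - ⟪bh, u - xstar⟫ + β/2 * ‖u - xstar‖^2 with hFfdef
  have hinner0 : ∀ w : EuclideanSpace ℝ (Fin n), (⟪w, xstar - xstar⟫ : ℝ) = 0 := by
    intro w; rw [sub_self, inner_zero_right]
  have hpsistar : psif xstar = G xstar - H xstar := by
    simp only [hpsif, hinner0, sub_zero]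
  have hFstar : Ff xstar = g xstar := by
    simp only [hFfdef, sub_self, inner_zero_right, norm_zero]
    ring
  have hstrict : ∀ u ∈ X, psif u < 0 → g xstar ≤ Ff u := by
    intro u huX hu
    have hlimc : Tendsto (fun i => G u - H (x (js i)) - ⟪sH (js i), u - x (js i)⟫) atTop
        (nhds (psif u)) :=
      (tendsto_const_nhds.sub ((hHc.tendsto _).comp hjsx)).sub
        (hsHlim.inner (tendsto_const_nhds.sub hjsx))
    have hev : ∀ᶠ i in atTop, G u - H (x (js i)) - ⟪sH (js i), u - x (js i)⟫ ≤ 0 :=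
      (hlimc.eventually_lt_const hu).mono (fun i hi => hi.le)
    have t1 : Tendsto (fun i => x (js i + 1) - x (js i)) atTop (nhds 0) := by
      have := hjsx1.sub hjsx
      simpa using this
    have hlhs : Tendsto (fun i => g (x (js i + 1)) - ⟪sh (js i), x (js i + 1) - x (js i)⟫ +
        β/2 * ‖x (js i + 1) - x (js i)‖^2) atTop (nhds (g xstar)) := by
      have h2 := (((hgc.tendsto _).comp hjsx1).sub (hshlim.inner t1)).add
        ((tendsto_const_nhds (x := β/2)).mul ((t1.norm).pow 2))
      simpa using h2
    have hrhs : Tendsto (fun i => g u - ⟪sh (js i), u - x (js i)⟫ + β/2 * ‖u - x (js i)‖^2)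
        atTop (nhds (Ff u)) := by
      have e1 : Tendsto (fun i => u - x (js i)) atTop (nhds (u - xstar)) :=
        (tendsto_const_nhds (x := u)).sub hjsx
      have h2 := ((tendsto_const_nhds (x := g u)).sub (hshlim.inner e1)).add
        ((tendsto_const_nhds (x := β/2)).mul ((e1.norm).pow 2))
      exact h2
    exact le_of_tendsto_of_tendsto hlhs hrhs
      (hev.mono (fun i hi => hmin2 (js i) u huX hi))
  -- Slater point
  obtain ⟨y0, hy0X, hy0⟩ : ∃ y0 ∈ X, psif y0 < 0 := by
    rcases lt_or_ge (psif xstar) 0 with hlt | hge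
    · exact ⟨xstar, hxstarX, hlt⟩
    · have heq : G xstar = H xstar := by
        rw [hpsistar] at hge
        linarith
      obtain ⟨y0, hy0X, _, hy0⟩ := hMFCQ xstar hxstarX hGHstar
      exact ⟨y0, hy0X, hy0 heq bH hbH⟩
  -- convexity-type inequalities for psif and Ff
  have hpsicomb : ∀ (u v : EuclideanSpace ℝ (Fin n)) (s t : ℝ), 0 ≤ s → 0 ≤ t → s + t = 1 →
      psif (s•u + t•v) ≤ s * psif u + t * psif v := by
    intro u v s t hs ht hst
    have h1 := hG.2 (Set.mem_univ u) (Set.mem_univ v) hs ht hst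
    simp only [smul_eq_mul] at h1
    have h2 := inner_combo bH xstar u v s t hst
    simp only [hpsif]
    rw [h2]
    have h3 : H xstar = s * H xstar + t * H xstar := by rw [← add_mul, hst, one_mul]
    linarith [h1]
  have hFmin : ∀ u ∈ X, psif u ≤ 0 → g xstar ≤ Ff u := by
    intro u huX hu
    rcases lt_or_eq_of_le hu with hlt | heq
    · exact hstrict u huX hlt
    · have hFc : Continuous Ff :=
        (hgc.sub (continuous_const.inner (continuous_id.sub continuous_const))).add
          (continuous_const.mul (((continuous_id.sub continuous_const).norm).pow 2))
      have ht0 : Tendsto (fun i : ℕ => 1/(i+1:ℝ)) atTop (nhds 0) :=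
        tendsto_one_div_add_atTop_nhds_zero_nat
      have hufl : Tendsto (fun i : ℕ => (1 - 1/(i+1:ℝ))•u + (1/(i+1:ℝ))•y0) atTop (nhds u) := by
        have h1 : Tendsto (fun i : ℕ => (1 - 1/(i+1:ℝ))•u) atTop (nhds ((1:ℝ)•u)) := by
          have := (tendsto_const_nhds (x := (1:ℝ))).sub ht0
          simp only [sub_zero] at this
          exact this.smul_const u
        have h2 : Tendsto (fun i : ℕ => (1/(i+1:ℝ))•y0) atTop (nhds ((0:ℝ)•y0)) :=
          ht0.smul_const y0
        have := h1.add h2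
        simpa using this
      have hkey : ∀ i : ℕ, g xstar ≤ Ff ((1 - 1/(i+1:ℝ))•u + (1/(i+1:ℝ))•y0) := by
        intro i
        have hti : (0:ℝ) < 1/(i+1:ℝ) := by positivity
        have hti1 : 1/(i+1:ℝ) ≤ 1 := by
          rw [div_le_one (by positivity)]
          linarith [Nat.cast_nonneg (α := ℝ) i]
        have hmem : (1 - 1/(i+1:ℝ))•u + (1/(i+1:ℝ))•y0 ∈ X :=
          hXconv huX hy0X (by linarith) hti.le (by ring)
        have hpsi : psif ((1 - 1/(i+1:ℝ))•u + (1/(i+1:ℝ))•y0) < 0 := by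
          have hcomb := hpsicomb u y0 (1 - 1/(i+1:ℝ)) (1/(i+1:ℝ)) (by linarith) hti.le (by ring)
          have h2 : (1/(i+1:ℝ)) * psif y0 < 0 := mul_neg_of_pos_of_neg hti hy0
          rw [heq, mul_zero] at hcomb
          linarith
        exact hstrict _ hmem hpsi
      exact ge_of_tendsto ((hFc.tendsto u).comp hufl) (Eventually.of_forall hkey)
  -- convexity-type inequality for Ff
  have hFcomb : ∀ (u v : EuclideanSpace ℝ (Fin n)) (s t : ℝ), 0 ≤ s → 0 ≤ t → s + t = 1 →
      Ff (s•u + t•v) ≤ s * Ff u + t * Ff v := by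
    intro u v s t hs ht hst
    have h1 := hg.2 (Set.mem_univ u) (Set.mem_univ v) hs ht hst
    simp only [smul_eq_mul] at h1
    have h2 := inner_combo bh xstar u v s t hst
    have h3 := norm_combo_sq u v xstar s t hst
    simp only [hFfdef]
    rw [h2, h3]
    nlinarith [mul_nonneg (mul_nonneg (mul_nonneg hβ hs) ht) (sq_nonneg ‖u - v‖)]
  -- two-dimensional separation to produce the multiplier
  set M2 : Set (ℝ × ℝ) := {rt | ∃ u ∈ X, psif u < rt.1 ∧ Ff u - g xstar < rt.2} with hM2
  have hM2open : IsOpen M2 := by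
    have : M2 = ⋃ u ∈ X, (Set.Ioi (psif u) ×ˢ Set.Ioi (Ff u - g xstar)) := by
      ext rt
      simp only [hM2, Set.mem_setOf_eq, Set.mem_iUnion, Set.mem_prod, Set.mem_Ioi, exists_prop]
    rw [this]
    exact isOpen_biUnion fun u _ => IsOpen.prod isOpen_Ioi isOpen_Ioi
  have hM2conv : Convex ℝ M2 := by
    rintro rt1 ⟨u1, hu1, h11, h12⟩ rt2 ⟨u2, hu2, h21, h22⟩ aa bb ha hb hab
    refine ⟨aa•u1 + bb•u2, hXconv hu1 hu2 ha hb hab, ?_, ?_⟩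
    · have h5 := hpsicomb u1 u2 aa bb ha hb hab
      have h3 := combo_lt ha hb hab h11 h21
      have h4 : (aa•rt1 + bb•rt2).1 = aa*rt1.1 + bb*rt2.1 := by
        simp [smul_eq_mul]
      rw [h4]
      linarith
    · have h5 := hFcomb u1 u2 aa bb ha hb hab
      have h3 := combo_lt ha hb hab h12 h22
      have h4 : (aa•rt1 + bb•rt2).2 = aa*rt1.2 + bb*rt2.2 := by
        simp [smul_eq_mul]
      have h6 : g xstar = aa * g xstar + bb * g xstar := by rw [← add_mul, hab, one_mul]
      rw [h4]
      linarith
  have hM20 : ((0:ℝ), (0:ℝ)) ∉ M2 := by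
    rintro ⟨u, huX, h1, h2⟩
    have := hFmin u huX h1.le
    simp only at h2
    linarith
  obtain ⟨f2, c2, hfM, hf0⟩ := geometric_hahn_banach_open hM2conv hM2open
    (convex_singleton ((0:ℝ), (0:ℝ))) (Set.disjoint_singleton_right.2 hM20)
  have hc2 : c2 ≤ 0 := by
    have := hf0 _ (Set.mem_singleton _)
    have h0 : ((0:ℝ), (0:ℝ)) = (0 : ℝ × ℝ) := rfl
    rw [h0, map_zero] at this
    exact this
  set c1 := f2 (1, 0) with hc1def
  set cc2 := f2 (0, 1) with hcc2def
  have key2 : ∀ rt : ℝ × ℝ, f2 rt = rt.1 * c1 + rt.2 * cc2 := by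
    intro rt
    have hrt : rt = rt.1 • ((1:ℝ), (0:ℝ)) + rt.2 • ((0:ℝ), (1:ℝ)) := by
      ext <;> simp
    conv_lhs => rw [hrt]
    rw [map_add, map_smul, map_smul, smul_eq_mul, smul_eq_mul, ← hc1def, ← hcc2def]
  have hXineq : ∀ u ∈ X, c1 * psif u + cc2 * (Ff u - g xstar) ≤ 0 := by
    intro u huX
    have haux : ∀ ε : ℝ, 0 < ε → ε ≤ 1 →
        (c1 * psif u + cc2 * (Ff u - g xstar)) + ε * (c1 + cc2) ≤ 0 := by
      intro ε hε _
      have hm : ((psif u + ε, Ff u - g xstar + ε) : ℝ × ℝ) ∈ M2 :=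
        ⟨u, huX, by simp only; linarith, by simp only; linarith⟩
      have hlt := hfM _ hm
      rw [key2] at hlt
      simp only at hlt
      nlinarith [hc2]
    exact aux_eps haux
  have hM2mem : ∀ r t : ℝ, psif xstar < r → 0 < t → ((r, t) : ℝ × ℝ) ∈ M2 := by
    intro r t h1 h2
    refine ⟨xstar, hxstarX, by simpa using h1, ?_⟩
    simp only
    rw [hFstar]
    simpa using h2
  have hc1 : c1 ≤ 0 := by
    by_contra hpos
    push_neg at hpos
    have hm := hM2mem (max (psif xstar + 1) ((1 - cc2)/c1)) 1
      (lt_of_lt_of_le (by linarith) (le_max_left _ _)) one_pos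
    have hlt := hfM _ hm
    rw [key2] at hlt
    simp only at hlt
    have hge : (1 - cc2)/c1 ≤ max (psif xstar + 1) ((1 - cc2)/c1) := le_max_right _ _
    rw [div_le_iff₀ hpos] at hge
    nlinarith [hc2]
  have hcc2le : cc2 ≤ 0 := by
    by_contra hpos
    push_neg at hpos
    have hm := hM2mem (psif xstar + 1) (max 1 ((1 - c1*(psif xstar + 1))/cc2))
      (by linarith) (lt_of_lt_of_le one_pos (le_max_left _ _))
    have hlt := hfM _ hm
    rw [key2] at hlt
    simp only at hlt
    have hge : (1 - c1*(psif xstar + 1))/cc2 ≤ max 1 ((1 - c1*(psif xstar + 1))/cc2) :=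
      le_max_right _ _
    rw [div_le_iff₀ hpos] at hge
    nlinarith [hc2]
  have hcc2 : cc2 < 0 := by
    rcases lt_or_eq_of_le hcc2le with hlt | heq0
    · exact hlt
    exfalso
    have h1 := hXineq y0 hy0X
    rw [heq0] at h1
    simp only [zero_mul, add_zero] at h1
    have hc1z : c1 = 0 := by nlinarith [hy0]
    have hm := hM2mem (psif xstar + 1) 1 (by linarith) one_pos
    have hlt := hfM _ hm
    rw [key2] at hlt
    simp only at hlt
    rw [hc1z, heq0] at hlt
    simp at hlt
    linarith [hc2]
  set lam := c1 / cc2 with hlamdef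
  have hlamnn : 0 ≤ lam := by
    rw [hlamdef, div_nonneg_iff]
    right
    exact ⟨hc1, hcc2.le⟩
  have hlagr : ∀ u ∈ X, 0 ≤ (Ff u - g xstar) + lam * psif u := by
    intro u huX
    have h1 := hXineq u huX
    have h2 : lam * cc2 = c1 := div_mul_cancel₀ _ (ne_of_lt hcc2)
    by_contra hneg
    push_neg at hneg
    have h3 : 0 < cc2 * ((Ff u - g xstar) + lam * psif u) :=
      mul_pos_of_neg_of_neg hcc2 hneg
    have h4 : cc2 * ((Ff u - g xstar) + lam * psif u) =
        cc2 * (Ff u - g xstar) + c1 * psif u := by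
      rw [← h2]; ring
    linarith
  have hpsistar_le : psif xstar ≤ 0 := by rw [hpsistar]; linarith
  have hcomp : lam * psif xstar = 0 := by
    have h1 := hlagr xstar hxstarX
    rw [hFstar, sub_self, zero_add] at h1
    have h2 : lam * psif xstar ≤ 0 := by
      nlinarith [mul_nonneg hlamnn (neg_nonneg.2 hpsistar_le)]
    linarith
  have hcomp' : lam * (G xstar - H xstar) = 0 := by rw [← hpsistar]; exact hcomp
  -- first application of the separation principle
  set wl : EuclideanSpace ℝ (Fin n) := -(bh + lam • bH) with hwl
  set q1 : EuclideanSpace ℝ (Fin n) → ℝ :=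
    fun u => (⟪wl, u - xstar⟫ + β/2 * ‖u - xstar‖^2) + (lam * G u + (-(lam * H xstar)))
    with hq1
  have hq1conv : ConvexOn ℝ Set.univ q1 :=
    ((convexOn_inner_sub wl xstar).add (convexOn_quad xstar (by linarith : (0:ℝ) ≤ β/2))).add
      ((convexOn_smul' hG hlamnn).add (convexOn_const _ convex_univ))
  have hq1star : q1 xstar = 0 := by
    simp only [hq1]
    rw [sub_self, inner_zero_right, norm_zero]
    linear_combination hcomp'
  have hq1min : ∀ u ∈ X, g xstar + q1 xstar ≤ g u + q1 u := by
    intro u huX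
    rw [hq1star, add_zero]
    have h1 := hlagr u huX
    have hexp : g u + q1 u = Ff u + lam * psif u := by
      simp only [hq1, hFfdef, hpsif, hwl]
      rw [inner_neg_left, inner_add_left, real_inner_smul_left]
      ring
    linarith
  obtain ⟨sg, hsg, hmin1⟩ := master hg hq1conv hXconv hxstarX hq1min
  -- produce sG together with the key inequality
  have hkeyfinal : ∃ sG ∈ subdiff G xstar, ∀ u ∈ X,
      0 ≤ ⟪(sg - bh) + lam • (sG - bH), u - xstar⟫ + β/2 * ‖u - xstar‖^2 := by
    rcases eq_or_lt_of_le hlamnn with hlam0 | hlampos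
    · obtain ⟨sG0, hsG0⟩ := subdiff_nonempty hG xstar
      refine ⟨sG0, hsG0, fun u huX => ?_⟩
      have h1 := hmin1 u huX
      rw [hq1star] at h1
      simp only [hq1, hwl] at h1
      rw [← hlam0] at h1 ⊢
      simp only [zero_smul, add_zero, zero_mul, neg_zero, mul_zero] at h1 ⊢
      rw [inner_neg_left] at h1
      rw [inner_sub_left]
      linarith
    · have hp2 : ConvexOn ℝ Set.univ (fun u => lam * G u) := convexOn_smul' hG hlamnn
      set q2 : EuclideanSpace ℝ (Fin n) → ℝ :=
        fun u => (⟪wl + sg, u - xstar⟫ + β/2 * ‖u - xstar‖^2) + (-(lam * H xstar)) with hq2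
      have hq2conv : ConvexOn ℝ Set.univ q2 :=
        ((convexOn_inner_sub _ _).add (convexOn_quad xstar (by linarith : (0:ℝ) ≤ β/2))).add
          (convexOn_const _ convex_univ)
      have hq2min : ∀ u ∈ X, (lam * G xstar) + q2 xstar ≤ (lam * G u) + q2 u := by
        intro u huX
        have h1 := hmin1 u huX
        rw [hq1star] at h1
        have hid : (lam * G u) + q2 u = q1 u + ⟪sg, u - xstar⟫ := by
          simp only [hq1, hq2]
          rw [inner_add_left]
          ring
        have hid2 : (lam * G xstar) + q2 xstar = 0 := by
          simp only [hq2]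
          rw [sub_self, inner_zero_right, norm_zero]
          linear_combination hcomp'
        rw [hid2, hid]
        linarith
      obtain ⟨s2, hs2, hmin3⟩ := master hp2 hq2conv hXconv hxstarX hq2min
      have hlamne : lam ≠ 0 := ne_of_gt hlampos
      refine ⟨lam⁻¹ • s2, ?_, ?_⟩
      · intro y
        have h1 := hs2 y
        have h3 : ⟪lam⁻¹ • s2, y - xstar⟫ = lam⁻¹ * ⟪s2, y - xstar⟫ :=
          real_inner_smul_left _ _ _
        rw [h3]
        have h4 := mul_le_mul_of_nonneg_left h1 (inv_nonneg.2 hlampos.le)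
        rw [mul_add, inv_mul_cancel_left₀ hlamne, inv_mul_cancel_left₀ hlamne] at h4
        linarith
      · intro u huX
        have h1 := hmin3 u huX
        have hss : lam • (lam⁻¹ • s2) = s2 := by
          rw [smul_smul, mul_inv_cancel₀ hlamne, one_smul]
        rw [smul_sub, hss]
        simp only [hq2, hwl] at h1
        rw [sub_self, inner_zero_right, norm_zero] at h1
        rw [inner_add_left, inner_neg_left, inner_add_left, real_inner_smul_left] at h1
        rw [inner_add_left, inner_sub_left, inner_sub_left, real_inner_smul_left]
        nlinarith [h1]
  obtain ⟨sG, hsG, hkey2⟩ := hkeyfinal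
  set w : EuclideanSpace ℝ (Fin n) := (sg - bh) + lam • (sG - bH) with hw
  have hvnormal : -w ∈ normalCone X xstar := by
    intro u huX
    have haux : ∀ ε : ℝ, 0 < ε → ε ≤ 1 →
        (-(⟪w, u - xstar⟫ : ℝ)) + ε * (-(β/2 * ‖u - xstar‖^2)) ≤ 0 := by
      intro ε hε hε1
      have hmem : (1-ε)•xstar + ε•u ∈ X := hXconv hxstarX huX (by linarith) hε.le (by ring)
      have h1 := hkey2 _ hmem
      have hd : (1-ε)•xstar + ε•u - xstar = ε•(u - xstar) := by module
      rw [hd, real_inner_smul_right, norm_smul] at h1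
      simp only [Real.norm_eq_abs, mul_pow, sq_abs] at h1
      have ht : 0 ≤ (⟪w, u - xstar⟫ : ℝ) + ε*(β/2*‖u - xstar‖^2) := by
        by_contra hcon
        push_neg at hcon
        have h2 := mul_neg_of_pos_of_neg hε hcon
        nlinarith [h1, h2]
      linarith
    have h0 := aux_eps haux
    rw [inner_neg_left]
    linarith
  refine ⟨hxstarX, hGHstar, lam, hlamnn, hcomp', sg, hsg, bh, hbh, sG, hsG, bH, hbH,
    -w, hvnormal, ?_⟩
  rw [hw]
  abel
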